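/- For every a ∈ ℝ, the sixth iterate of the trace map fixes (0,0,a), i.e., T⁶(0,0,a) = (0,0,a), and the total derivative (Jacobian matrix) of T⁶ at the point (0,0,a) equals the matrix with rows (16a⁴ − 4a² + 1, 8a³, 0), (8a³, 4a² + 1, 0), (0, 0, 1). -/

import Mathlib

noncomputable section

/-- The trace map `T(x,y,z) = (2xy - z, x, y)` on `ℝ³`. -/
def traceMap (v : Fin 3 → ℝ) : Fin 3 → ℝ :=
  ![2 * v 0 * v 1 - v 2, v 0, v 1]

def Jm (v : Fin 3 → ℝ) : Matrix (Fin 3) (Fin 3) ℝ :=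
  !![2 * v 1, 2 * v 0, -1; 1, 0, 0; 0, 1, 0]

lemma traceMap_hasFDerivAt (v : Fin 3 → ℝ) :
    HasFDerivAt traceMap (LinearMap.toContinuousLinearMap ((Jm v).mulVecLin)) v := by
  apply hasFDerivAt_pi''
  have hp : ∀ i : Fin 3, HasFDerivAt (fun w : Fin 3 → ℝ => w i)
      ((ContinuousLinearMap.proj i : (Fin 3 → ℝ) →L[ℝ] ℝ)) v := by
    intro i; exact hasFDerivAt_apply i v
  intro i
  fin_cases i
  · refine ((((hp 0).const_mul 2).mul (hp 1)).sub (hp 2)).congr_fderiv ?_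
    ext u
    simp [Jm, Matrix.mulVecLin_apply, Matrix.mulVec, dotProduct, Fin.sum_univ_three]
    ring
  · refine (hp 0).congr_fderiv ?_
    ext u
    simp [Jm, Matrix.mulVecLin_apply, Matrix.mulVec, dotProduct, Fin.sum_univ_three]
  · refine (hp 1).congr_fderiv ?_
    ext u
    simp [Jm, Matrix.mulVecLin_apply, Matrix.mulVec, dotProduct, Fin.sum_univ_three]

/-- For every `a ∈ ℝ`, the sixth iterate of the trace map fixes `(0,0,a)`, and its
Jacobian there is `[[16a⁴-4a²+1, 8a³, 0], [8a³, 4a²+1, 0], [0,0,1]]`. -/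
theorem traceMap_sixth_iterate_at_axis (a : ℝ) :
    traceMap^[6] ![0, 0, a] = ![0, 0, a] ∧
    (fderiv ℝ (traceMap^[6]) ![0, 0, a] : (Fin 3 → ℝ) →ₗ[ℝ] (Fin 3 → ℝ)) =
      Matrix.mulVecLin !![16 * a ^ 4 - 4 * a ^ 2 + 1, 8 * a ^ 3, 0;
                          8 * a ^ 3, 4 * a ^ 2 + 1, 0;
                          0, 0, 1] := by
  have e1 : traceMap ![0, 0, a] = ![-a, 0, 0] := by
    funext i; fin_cases i <;> simp [traceMap]
  have e2 : traceMap ![-a, 0, 0] = ![0, -a, 0] := by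
    funext i; fin_cases i <;> simp [traceMap]
  have e3 : traceMap ![0, -a, 0] = ![0, 0, -a] := by
    funext i; fin_cases i <;> simp [traceMap]
  have e4 : traceMap ![0, 0, -a] = ![a, 0, 0] := by
    funext i; fin_cases i <;> simp [traceMap]
  have e5 : traceMap ![a, 0, 0] = ![0, a, 0] := by
    funext i; fin_cases i <;> simp [traceMap]
  have e6 : traceMap ![0, a, 0] = ![0, 0, a] := by
    funext i; fin_cases i <;> simp [traceMap]
  have hiter : traceMap^[6] ![0, 0, a] = ![0, 0, a] := by
    simp only [Function.iterate_succ, Function.iterate_zero, Function.comp_apply, id_eq,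
      e1, e2, e3, e4, e5, e6]
  refine ⟨hiter, ?_⟩
  have H1 : HasFDerivAt (traceMap^[1])
      (LinearMap.toContinuousLinearMap ((Jm ![0, 0, a]).mulVecLin)) ![0, 0, a] := by
    rw [Function.iterate_one]; exact traceMap_hasFDerivAt _
  have step : ∀ (n : ℕ) (D : (Fin 3 → ℝ) →L[ℝ] (Fin 3 → ℝ)) (q : Fin 3 → ℝ),
      traceMap^[n] ![0, 0, a] = q → HasFDerivAt (traceMap^[n]) D ![0, 0, a] →
      HasFDerivAt (traceMap^[n+1])
        ((LinearMap.toContinuousLinearMap ((Jm q).mulVecLin)).comp D) ![0, 0, a] := by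
    intro n D q hq hD
    subst hq
    rw [Function.iterate_succ']
    exact (traceMap_hasFDerivAt _).comp _ hD
  have v1 : traceMap^[1] ![0, 0, a] = ![-a, 0, 0] := by simpa using e1
  have v2 : traceMap^[2] ![0, 0, a] = ![0, -a, 0] := by
    rw [Function.iterate_succ_apply', v1, e2]
  have v3 : traceMap^[3] ![0, 0, a] = ![0, 0, -a] := by
    rw [Function.iterate_succ_apply', v2, e3]
  have v4 : traceMap^[4] ![0, 0, a] = ![a, 0, 0] := by
    rw [Function.iterate_succ_apply', v3, e4]
  have v5 : traceMap^[5] ![0, 0, a] = ![0, a, 0] := by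
    rw [Function.iterate_succ_apply', v4, e5]
  have H6 := step 5 _ _ v5 (step 4 _ _ v4 (step 3 _ _ v3 (step 2 _ _ v2 (step 1 _ _ v1 H1))))
  rw [H6.fderiv]
  simp only [ContinuousLinearMap.toLinearMap_comp, LinearMap.coe_toContinuousLinearMap,
    ← Matrix.mulVecLin_mul]
  congr 1
  ext i j
  fin_cases i <;> fin_cases j <;>
    simp [Jm, Matrix.mul_apply, Fin.sum_univ_three] <;> ring
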